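/- Scale views are interval injective: for the view given by φ_x(v) = k x * v with k : Var → ℤ and k x ≠ 0 for all x, and for every finite nonempty φ-constraint c over ℤ (every a ∈ c lies in the range of φ_Asn), the preimage of the convex hull equals the convex hull of the preimage: φ_Asn ⁻¹' ⟦conv(c)⟧ = ⟦conv(φ_Asn ⁻¹' c)⟧. -/
import Mathlib


namespace Stmt16

variable {Var : Type*}

/-- The assignment set of a domain. -/
def asn (d : Var → Set ℤ) : Set (Var → ℤ) := {a | ∀ x, a x ∈ d x}

/-- A view lifted to assignments. -/
def lift (φ : Var → ℤ → ℤ) (a : Var → ℤ) : Var → ℤ := fun x => φ x (a x)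

/-- The strongest convex domain containing a constraint: for a finite nonempty constraint `c`,
`conv c x = Set.Icc (min over a ∈ c of a x) (max over a ∈ c of a x)`, and `conv ∅` is the
empty domain.  (A value lies between the min and the max of `{a x | a ∈ c}` iff it is above
some `a x` and below some `a' x`.) -/
def conv (c : Set (Var → ℤ)) : Var → Set ℤ :=
  fun x => {v | (∃ a ∈ c, a x ≤ v) ∧ (∃ a ∈ c, v ≤ a x)}

/-- Scale views are interval injective: for the view `φ_x(v) = k x * v` with `k x ≠ 0` for all
`x`, and every finite nonempty `φ`-constraint `c`, the preimage of the convex hull equals the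
convex hull of the preimage. -/
theorem scale_interval_injective (k : Var → ℤ) (hk : ∀ x, k x ≠ 0)
    (c : Set (Var → ℤ)) (hfin : c.Finite) (hne : c.Nonempty)
    (hphic : ∀ a ∈ c, a ∈ Set.range (lift (fun x v => k x * v))) :
    lift (fun x v => k x * v) ⁻¹' asn (conv c) =
      asn (conv (lift (fun x v => k x * v) ⁻¹' c)) := by
  ext a
  simp only [Set.mem_preimage, asn, conv, Set.mem_setOf_eq, lift]
  constructor
  · intro h x
    obtain ⟨⟨a1, ha1, h1⟩, ⟨a2, ha2, h2⟩⟩ := h x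
    obtain ⟨b1, rfl⟩ := hphic a1 ha1
    obtain ⟨b2, rfl⟩ := hphic a2 ha2
    simp only [lift] at h1 h2 ha1 ha2 ⊢
    rcases lt_or_gt_of_ne (hk x) with hneg | hpos
    · exact ⟨⟨b2, ha2, by nlinarith⟩, ⟨b1, ha1, by nlinarith⟩⟩
    · exact ⟨⟨b1, ha1, by nlinarith⟩, ⟨b2, ha2, by nlinarith⟩⟩
  · intro h x
    obtain ⟨⟨b1, hb1, h1⟩, ⟨b2, hb2, h2⟩⟩ := h x
    rcases lt_or_gt_of_ne (hk x) with hneg | hpos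
    · exact ⟨⟨_, hb2, by simp only [lift]; nlinarith⟩, ⟨_, hb1, by simp only [lift]; nlinarith⟩⟩
    · exact ⟨⟨_, hb1, by simp only [lift]; nlinarith⟩, ⟨_, hb2, by simp only [lift]; nlinarith⟩⟩

end Stmt16
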